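/- If D is a directed cycle on n vertices, then the directed linear forest complex Dlf(D) and the directed tree complex DT(D) coincide, and this complex is exactly the boundary of the (n−1)-simplex on the edge set E(D); in particular it is vertex decomposable. -/
import Mathlib


namespace ArXiv

/-! ## Multidigraphs and their directed-forest complexes.
A multidigraph on vertex type `V` with edge type `E` is given by source and
target maps `s t : E → V`. -/

/-- `σ` induces a directed cycle (of some length `n ≥ 1`) in the multidigraph `(s, t)`:
its edges can be arranged cyclically, with pairwise distinct sources, the target of each
edge being the source of the next one. -/
def IsDirCycle {V E : Type} (s t : E → V) (n : ℕ) (σ : Finset E) : Prop :=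
  0 < n ∧ ∃ g : ZMod n → E, Function.Injective g ∧
    (∀ e, e ∈ σ ↔ ∃ i, g i = e) ∧
    Function.Injective (fun i => s (g i)) ∧
    (∀ i, t (g i) = s (g (i + 1)))

/-- No subset of `σ` induces a directed cycle. -/
def NoDirCycleIn {V E : Type} (s t : E → V) (σ : Finset E) : Prop :=
  ∀ (n : ℕ) (τ : Finset E), τ ⊆ σ → ¬ IsDirCycle s t n τ

/-- `σ` induces a vertex-disjoint union of directed paths: all sources are distinct,
all targets are distinct, and there is no directed cycle inside `σ`. -/
def IsLinearForest {V E : Type} (s t : E → V) (σ : Finset E) : Prop :=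
  (∀ e ∈ σ, ∀ f ∈ σ, e ≠ f → s e ≠ s f) ∧
  (∀ e ∈ σ, ∀ f ∈ σ, e ≠ f → t e ≠ t f) ∧
  NoDirCycleIn s t σ

/-- `σ` induces a directed forest: no two distinct edges share a target and there is
no directed cycle inside `σ`. -/
def IsDirForest {V E : Type} (s t : E → V) (σ : Finset E) : Prop :=
  (∀ e ∈ σ, ∀ f ∈ σ, e ≠ f → t e ≠ t f) ∧
  NoDirCycleIn s t σ

/-- The directed linear forest complex `Dlf(D)`, as its set of faces. -/
def Dlf {V E : Type} (s t : E → V) : Set (Finset E) := {σ | IsLinearForest s t σ}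

/-- The directed tree complex `DT(D)`, as its set of faces. -/
def DT {V E : Type} (s t : E → V) : Set (Finset E) := {σ | IsDirForest s t σ}

/-- The edges `e` and `f` have the same unordered pair of endpoints. -/
def SameEnds {V E : Type} (s t : E → V) (e f : E) : Prop :=
  (s e = s f ∧ t e = t f) ∨ (s e = t f ∧ t e = s f)

/-- Adjacency in the linear-forest conflict graph `G^lf_D`. -/
def LFAdj {V E : Type} (s t : E → V) (e f : E) : Prop :=
  e ≠ f ∧ (s e = s f ∨ t e = t f ∨ SameEnds s t e f)

/-- Adjacency in the tree conflict graph `G^t_D`. -/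
def TAdj {V E : Type} (s t : E → V) (e f : E) : Prop :=
  e ≠ f ∧ (t e = t f ∨ SameEnds s t e f)

/-- `σ` is an independent set for the adjacency relation `A`. -/
def IndepIn {E : Type} (A : E → E → Prop) (σ : Finset E) : Prop :=
  ∀ e ∈ σ, ∀ f ∈ σ, ¬ A e f

/-- `D` has no directed cycle of length at least 3 (directed 2-cycles are allowed). -/
def TwoAcyclic {V E : Type} (s t : E → V) : Prop :=
  ∀ (n : ℕ) (σ : Finset E), 3 ≤ n → ¬ IsDirCycle s t n σ

/-- `D` has no directed cycles at all. -/
def Acyclic {V E : Type} (s t : E → V) : Prop :=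
  ∀ (n : ℕ) (σ : Finset E), ¬ IsDirCycle s t n σ

/-- Adjacency in the underlying (simple, undirected) graph of `D`. -/
def UAdj {V E : Type} (s t : E → V) (u v : V) : Prop :=
  u ≠ v ∧ ∃ e, (s e = u ∧ t e = v) ∨ (s e = v ∧ t e = u)

/-- The underlying graph of `D` is a forest: it contains no cycle of length `≥ 3`. -/
def UnderlyingForest {V E : Type} (s t : E → V) : Prop :=
  ¬ ∃ m : ℕ, 3 ≤ m ∧ ∃ h : ZMod m → V, Function.Injective h ∧
    ∀ i, UAdj s t (h i) (h (i + 1))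

/-- An alternating closed trail: a cyclic sequence of distinct edges in which any two
cyclically consecutive edges share a source or share a target. -/
def HasAltClosedTrail {V E : Type} (s t : E → V) : Prop :=
  ∃ k : ℕ, 2 ≤ k ∧ ∃ g : ZMod k → E, Function.Injective g ∧
    ∀ i, s (g i) = s (g (i + 1)) ∨ t (g i) = t (g (i + 1))

/-- `D` has no induced subgraph isomorphic to `L₂`, the double directed string on
three vertices. -/
def IsL2Free {V E : Type} (s t : E → V) : Prop :=
  ¬ ∃ a b c : V, a ≠ b ∧ b ≠ c ∧ a ≠ c ∧
    ∃ e1 e2 e3 e4 : E,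
      e1 ≠ e2 ∧ e1 ≠ e3 ∧ e1 ≠ e4 ∧ e2 ≠ e3 ∧ e2 ≠ e4 ∧ e3 ≠ e4 ∧
      s e1 = a ∧ t e1 = b ∧ s e2 = b ∧ t e2 = a ∧
      s e3 = b ∧ t e3 = c ∧ s e4 = c ∧ t e4 = b ∧
      ∀ f : E, s f ∈ ({a, b, c} : Set V) → t f ∈ ({a, b, c} : Set V) →
        f ∈ ({e1, e2, e3, e4} : Set E)

/-- The relation `A` (a graph on `β`) has an induced cycle of length at least 4. -/
def HasInducedCycleGE4 {β : Type} (A : β → β → Prop) : Prop :=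
  ∃ n : ℕ, 4 ≤ n ∧ ∃ g : ZMod n → β, Function.Injective g ∧
    ∀ i j : ZMod n, i ≠ j → (A (g i) (g j) ↔ j = i + 1 ∨ i = j + 1)

/-! ## Simplicial complexes (as sets of faces). -/

/-- `σ` is a facet (inclusion-maximal face) of `Δ`. -/
def IsFacetOf {α : Type} (Δ : Set (Finset α)) (σ : Finset α) : Prop :=
  σ ∈ Δ ∧ ∀ τ ∈ Δ, σ ⊆ τ → σ = τ

/-- Deletion of the vertex `v` in `Δ`. -/
def delC {α : Type} (Δ : Set (Finset α)) (v : α) : Set (Finset α) :=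
  {τ ∈ Δ | v ∉ τ}

/-- Link of the vertex `v` in `Δ`. -/
def linkC {α : Type} [DecidableEq α] (Δ : Set (Finset α)) (v : α) : Set (Finset α) :=
  {τ | τ ∈ Δ ∧ v ∉ τ ∧ insert v τ ∈ Δ}

/-- `v` is a shedding vertex: every facet of the deletion is a facet of `Δ`. -/
def SheddingVertex {α : Type} (Δ : Set (Finset α)) (v : α) : Prop :=
  ∀ σ, IsFacetOf (delC Δ v) σ → IsFacetOf Δ σ

/-- Vertex decomposability. -/
inductive VertexDecomposable {α : Type} [DecidableEq α] : Set (Finset α) → Prop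
  | void : VertexDecomposable (∅ : Set (Finset α))
  | simplex (σ : Finset α) : VertexDecomposable {τ | τ ⊆ σ}
  | shed (Δ : Set (Finset α)) (v : α) :
      VertexDecomposable (linkC Δ v) → VertexDecomposable (delC Δ v) →
      SheddingVertex Δ v → VertexDecomposable Δ

/-- Shellability (in the non-pure sense of Björner–Wachs). -/
def Shellable {α : Type} (Δ : Set (Finset α)) : Prop :=
  ∃ (m : ℕ) (F : Fin m → Finset α), Function.Injective F ∧
    (∀ σ, IsFacetOf Δ σ ↔ ∃ i, F i = σ) ∧
    ∀ i : Fin m, 0 < (i : ℕ) → ∀ τ : Finset α, τ ⊆ F i → (∃ j, j < i ∧ τ ⊆ F j) →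
      ∃ ρ : Finset α, ρ ⊆ F i ∧ (∃ j, j < i ∧ ρ ⊆ F j) ∧
        ρ.card + 1 = (F i).card ∧ τ ⊆ ρ

/-- The pure `d`-skeleton of `Δ`: the subcomplex generated by the `d`-dimensional faces. -/
def pureSkel {α : Type} (Δ : Set (Finset α)) (d : ℕ) : Set (Finset α) :=
  {τ | ∃ σ ∈ Δ, σ.card = d + 1 ∧ τ ⊆ σ}

/-- Link of a face `σ` in `Δ`. -/
def linkFaceC {α : Type} [DecidableEq α] (Δ : Set (Finset α)) (σ : Finset α) :
    Set (Finset α) :=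
  {τ | τ ∩ σ = ∅ ∧ τ ∪ σ ∈ Δ}

/-- Connectivity of a simplicial complex: any two vertices are joined by an edge path. -/
def ComplexConnected {α : Type} [DecidableEq α] (Δ : Set (Finset α)) : Prop :=
  ∀ u v : α, ({u} : Finset α) ∈ Δ → ({v} : Finset α) ∈ Δ →
    Relation.ReflTransGen (fun a b => ({a, b} : Finset α) ∈ Δ) u v

/-! ## Simplicial homology via ordered chains, and (sequential) Cohen–Macaulayness. -/

/-- A chain (a function on ordered tuples) is supported on faces of `Δ`. -/
def validChain {α K : Type} [DecidableEq α] [Field K] {k : ℕ}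
    (Δ : Set (Finset α)) (c : (Fin k → α) → K) : Prop :=
  ∀ g, c g ≠ 0 → (Finset.univ.image g) ∈ Δ

/-- The simplicial boundary operator on ordered chains. -/
def bdry {α K : Type} [Fintype α] [Field K] {k : ℕ}
    (c : (Fin (k + 2) → α) → K) : (Fin (k + 1) → α) → K :=
  fun g => ∑ j : Fin (k + 2), (-1 : K) ^ (j : ℕ) * ∑ v : α, c (Fin.insertNth j v g)

/-- Vanishing of the `i`-th reduced simplicial homology of `Δ` with coefficients in `K`
(computed with ordered chains; degree `0` uses the augmentation). -/
def RHomZero (α K : Type) [Fintype α] [DecidableEq α] [Field K]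
    (Δ : Set (Finset α)) : ℕ → Prop
  | 0 => ∀ c : (Fin 1 → α) → K, validChain Δ c → (∑ g : Fin 1 → α, c g) = 0 →
      ∃ b : (Fin 2 → α) → K, validChain Δ b ∧ bdry b = c
  | (i + 1) => ∀ c : (Fin (i + 2) → α) → K, validChain Δ c → bdry c = 0 →
      ∃ b : (Fin (i + 3) → α) → K, validChain Δ b ∧ bdry b = c

/-- `Δ` is Cohen–Macaulay over `K`: for every face `σ`, the reduced homology of its
link vanishes in all degrees strictly below the dimension of the link. -/
def IsCM (α K : Type) [Fintype α] [DecidableEq α] [Field K]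
    (Δ : Set (Finset α)) : Prop :=
  ∀ σ ∈ Δ, ∀ i : ℕ, (∃ τ ∈ linkFaceC Δ σ, i + 2 ≤ τ.card) →
    RHomZero α K (linkFaceC Δ σ) i

/-- `Δ` is sequentially Cohen–Macaulay over `K`: every pure skeleton is Cohen–Macaulay. -/
def IsSCM (α K : Type) [Fintype α] [DecidableEq α] [Field K]
    (Δ : Set (Finset α)) : Prop :=
  ∀ d : ℕ, IsCM α K (pureSkel Δ d)

/-! ## The double directed string `Lₙ` and the double directed cycle `Pₙ`. -/

/-- Source map of `Lₙ`: `inl i` is the edge `i → i+1`, `inr i` the edge `i+1 → i`. -/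
def sL (n : ℕ) : Fin n ⊕ Fin n → Fin (n + 1) := Sum.elim Fin.castSucc Fin.succ

/-- Target map of `Lₙ`. -/
def tL (n : ℕ) : Fin n ⊕ Fin n → Fin (n + 1) := Sum.elim Fin.succ Fin.castSucc

/-- Source map of `Pₙ`: `inl i` is the edge `eᵢ : i → i+1`, `inr i` is `eᵢ' : i+1 → i`. -/
def sP (n : ℕ) : ZMod n ⊕ ZMod n → ZMod n := Sum.elim id (fun i => i + 1)

/-- Target map of `Pₙ`. -/
def tP (n : ℕ) : ZMod n ⊕ ZMod n → ZMod n := Sum.elim (fun i => i + 1) id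



/-- The boundary of the simplex on `U` is vertex decomposable. -/
lemma bdVD {α : Type} [DecidableEq α] (U : Finset α) :
    VertexDecomposable {τ : Finset α | τ ⊆ U ∧ τ ≠ U} := by
  induction U using Finset.strongInduction with
  | _ U ih =>
    rcases eq_or_ne U ∅ with rfl | hU
    · have : {τ : Finset α | τ ⊆ ∅ ∧ τ ≠ ∅} = (∅ : Set (Finset α)) := by
        ext τ
        simp only [Set.mem_setOf_eq, Finset.subset_empty, Set.mem_empty_iff_false, iff_false,
          not_and]
        rintro rfl h
        exact h rfl
      rw [this]
      exact VertexDecomposable.void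
    · obtain ⟨v, hv⟩ := Finset.nonempty_iff_ne_empty.2 hU
      set Δ : Set (Finset α) := {τ : Finset α | τ ⊆ U ∧ τ ≠ U} with hΔdef
      have herase : U.erase v ≠ U := fun h => Finset.notMem_erase v U (h.symm ▸ hv)
      have hdel : delC Δ v = {τ : Finset α | τ ⊆ U.erase v} := by
        ext τ
        constructor
        · rintro ⟨⟨hτU, -⟩, hvτ⟩
          exact Finset.subset_erase.2 ⟨hτU, hvτ⟩
        · intro hτ
          have hsub := Finset.subset_erase.1 hτ
          exact ⟨⟨hsub.1, fun h => hsub.2 (h ▸ hv)⟩, hsub.2⟩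
      have hlink : linkC Δ v = {τ : Finset α | τ ⊆ U.erase v ∧ τ ≠ U.erase v} := by
        ext τ
        constructor
        · rintro ⟨⟨hτU, -⟩, hvτ, hins, hinsne⟩
          refine ⟨Finset.subset_erase.2 ⟨hτU, hvτ⟩, ?_⟩
          rintro rfl
          exact hinsne (Finset.insert_erase hv)
        · rintro ⟨hτ, hne⟩
          have hsub := Finset.subset_erase.1 hτ
          refine ⟨⟨hsub.1, fun h => hsub.2 (h ▸ hv)⟩, hsub.2, Finset.insert_subset hv hsub.1, ?_⟩
          intro h
          apply hne
          rw [← h, Finset.erase_insert hsub.2]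
      refine VertexDecomposable.shed Δ v ?_ ?_ ?_
      · rw [hlink]
        exact ih (U.erase v) (Finset.erase_ssubset hv)
      · rw [hdel]
        exact VertexDecomposable.simplex (U.erase v)
      · intro σ hσ
        have hEU : U.erase v ∈ delC Δ v := by
          rw [hdel]; exact Finset.Subset.refl _
        have hσE : σ ⊆ U.erase v := by
          have := hσ.1; rw [hdel] at this; exact this
        have hσeq : σ = U.erase v := hσ.2 _ hEU hσE
        subst hσeq
        refine ⟨⟨Finset.erase_subset _ _, herase⟩, ?_⟩
        rintro τ ⟨hτU, hτne⟩ hsub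
        by_cases hvτ : v ∈ τ
        · exfalso
          apply hτne
          apply Finset.Subset.antisymm hτU
          intro x hx
          rcases eq_or_ne x v with rfl | hxv
          · exact hvτ
          · exact hsub (Finset.mem_erase.2 ⟨hxv, hx⟩)
        · exact Finset.Subset.antisymm hsub (Finset.subset_erase.2 ⟨hτU, hvτ⟩)

/-- If `D` is a directed cycle on `n` vertices, then `Dlf(D) = DT(D)`,
this complex is the boundary of the `(n−1)`-simplex on the edge set `E(D)`, and it is
vertex decomposable. -/
theorem statement_5 {V E : Type} [DecidableEq E] [Fintype E]
    (s t : E → V) (n : ℕ) [NeZero n] (g : ZMod n ≃ E)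
    (hcyc : ∀ i, t (g i) = s (g (i + 1)))
    (hinj : Function.Injective fun i => s (g i))
    (hsurj : Function.Surjective fun i => s (g i)) :
    Dlf s t = DT s t ∧
    Dlf s t = {σ : Finset E | σ ≠ Finset.univ} ∧
    VertexDecomposable (Dlf s t) := by
  classical
  have hcard : Fintype.card E = n := (Fintype.card_congr g.symm).trans (ZMod.card n)
  have sInj : Function.Injective s := by
    intro e f h
    have h2 : s (g (g.symm e)) = s (g (g.symm f)) := by simpa using h
    have := hinj h2
    simpa using congrArg g this
  have tInj : Function.Injective t := by
    intro e f h
    have h2 : t (g (g.symm e)) = t (g (g.symm f)) := by simpa using h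
    rw [hcyc, hcyc] at h2
    have := hinj h2
    have h3 : g.symm e = g.symm f := by
      have := congrArg (fun x => x - 1) this
      simpa using this
    simpa using congrArg g h3
  have cycUniv : IsDirCycle s t n (Finset.univ : Finset E) := by
    refine ⟨Nat.pos_of_ne_zero (NeZero.ne n), g, g.injective, ?_, hinj, hcyc⟩
    intro e
    simp only [Finset.mem_univ, true_iff]
    exact ⟨g.symm e, g.apply_symm_apply e⟩
  have keyCyc : ∀ (m : ℕ) (τ : Finset E), IsDirCycle s t m τ → τ = Finset.univ := by
    rintro m τ ⟨hm, h, hinjh, hmem, -, hstep⟩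
    haveI : NeZero m := ⟨hm.ne'⟩
    set φ : ZMod m → ZMod n := fun i => g.symm (h i) with hφ
    have hφstep : ∀ i, φ (i + 1) = φ i + 1 := by
      intro i
      apply hinj
      show s (g (φ (i + 1))) = s (g (φ i + 1))
      rw [← hcyc (φ i)]
      simp only [hφ, Equiv.apply_symm_apply]
      exact (hstep i).symm
    have hiter : ∀ k : ℕ, φ ((k : ZMod m)) = φ 0 + ((k : ℕ) : ZMod n) := by
      intro k
      induction k with
      | zero => simp
      | succ k ihk =>
        push_cast
        rw [hφstep, ihk]
        ring
    have h0 : ((m : ℕ) : ZMod n) = 0 := by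
      have hm0 := hiter m
      rw [ZMod.natCast_self] at hm0
      exact left_eq_add.mp hm0
    have hndvd : n ∣ m := (ZMod.natCast_eq_zero_iff m n).1 h0
    have hle : m ≤ n := by
      have := Fintype.card_le_of_injective h hinjh
      rwa [ZMod.card, hcard] at this
    have hmn : m = n := le_antisymm hle (Nat.le_of_dvd hm hndvd)
    have hsurjh : Function.Surjective h := by
      have : Function.Bijective h :=
        (Fintype.bijective_iff_injective_and_card h).2 ⟨hinjh, by rw [ZMod.card, hcard, hmn]⟩
      exact this.2
    ext e
    simp only [Finset.mem_univ, iff_true, hmem e]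
    exact hsurjh e
  have hDlf : Dlf s t = {σ : Finset E | σ ≠ Finset.univ} := by
    ext σ
    constructor
    · rintro ⟨-, -, hnc⟩ rfl
      exact hnc n Finset.univ (Finset.Subset.refl _) cycUniv
    · intro hne
      refine ⟨fun e _ f _ hef hs => hef (sInj hs), fun e _ f _ hef ht => hef (tInj ht), ?_⟩
      intro m τ hsub hc
      apply hne
      have := keyCyc m τ hc
      subst this
      exact Finset.Subset.antisymm (Finset.subset_univ σ) hsub
  have hDT : DT s t = {σ : Finset E | σ ≠ Finset.univ} := by
    ext σ
    constructor
    · rintro ⟨-, hnc⟩ rfl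
      exact hnc n Finset.univ (Finset.Subset.refl _) cycUniv
    · intro hne
      refine ⟨fun e _ f _ hef ht => hef (tInj ht), ?_⟩
      intro m τ hsub hc
      apply hne
      have := keyCyc m τ hc
      subst this
      exact Finset.Subset.antisymm (Finset.subset_univ σ) hsub
  refine ⟨hDlf.trans hDT.symm, hDlf, ?_⟩
  rw [hDlf]
  have := bdVD (Finset.univ : Finset E)
  have heq : {τ : Finset E | τ ⊆ Finset.univ ∧ τ ≠ Finset.univ}
      = {σ : Finset E | σ ≠ Finset.univ} := by
    ext τ; simp [Finset.subset_univ]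
  rwa [heq] at this

end ArXiv
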